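/- If n is a positive integer with KL(n) > 0, then h(n) ≥ 27/(2π²). -/

import Mathlib

open Finset

/-- `KL n = ∑_{d ∣ n} d · log (d / (2 φ(d)))`. -/
noncomputable def KL (n : ℕ) : ℝ :=
  ∑ d ∈ n.divisors, (d : ℝ) * Real.log ((d : ℝ) / (2 * (Nat.totient d : ℝ)))

/-- `h n = σ(n) / n`. -/
noncomputable def h (n : ℕ) : ℝ := ((∑ d ∈ n.divisors, d : ℕ) : ℝ) / (n : ℝ)

/-- Weierstrass product inequality. -/
lemma aux_prod_one_sub (s : Finset ℕ) (f : ℕ → ℝ) (h0 : ∀ i ∈ s, 0 ≤ f i)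
    (h1 : ∀ i ∈ s, f i ≤ 1) :
    1 - ∑ i ∈ s, f i ≤ ∏ i ∈ s, (1 - f i) := by
  induction s using Finset.induction with
  | empty => simp
  | @insert a t ha ih =>
    rw [Finset.sum_insert ha, Finset.prod_insert ha]
    have h0a : 0 ≤ f a := h0 a (mem_insert_self a t)
    have h1a : f a ≤ 1 := h1 a (mem_insert_self a t)
    have ih' := ih (fun i hi => h0 i (mem_insert_of_mem hi))
      (fun i hi => h1 i (mem_insert_of_mem hi))
    have hsum : (0:ℝ) ≤ ∑ i ∈ t, f i :=
      Finset.sum_nonneg fun i hi => h0 i (mem_insert_of_mem hi)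
    nlinarith [mul_le_mul_of_nonneg_left ih' (by linarith : (0:ℝ) ≤ 1 - f a)]

lemma aux_telescope (N : ℕ) :
    ∑ k ∈ Finset.Icc 1 N, ((1:ℝ)/(k:ℝ) - 1/((k:ℝ)+1)) = 1 - 1/((N:ℝ)+1) := by
  induction N with
  | zero => simp
  | succ n ih =>
    rw [Finset.sum_Icc_succ_top (by omega : 1 ≤ n + 1), ih]
    push_cast
    have h1 : ((n:ℝ) + 1) ≠ 0 := by positivity
    have h2 : ((n:ℝ) + 1 + 1) ≠ 0 := by positivity
    field_simp
    ring

lemma aux_sum_tel_le (Q : Finset ℕ) (hQ : ∀ k ∈ Q, 1 ≤ k) :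
    ∑ k ∈ Q, ((1:ℝ)/(k:ℝ) - 1/((k:ℝ)+1)) ≤ 1 := by
  set N := Q.sup id with hN
  have hsub : Q ⊆ Finset.Icc 1 N := by
    intro k hk
    exact Finset.mem_Icc.mpr ⟨hQ k hk, Finset.le_sup (f := id) hk⟩
  have hnn : ∀ k ∈ Finset.Icc 1 N, k ∉ Q → (0:ℝ) ≤ 1/(k:ℝ) - 1/((k:ℝ)+1) := by
    intro k hk _
    have h1 : 1 ≤ k := (Finset.mem_Icc.mp hk).1
    have hk0 : (0:ℝ) < (k:ℝ) := by exact_mod_cast h1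
    have : (1:ℝ)/((k:ℝ)+1) ≤ 1/(k:ℝ) := by
      apply one_div_le_one_div_of_le hk0; linarith
    linarith
  calc ∑ k ∈ Q, ((1:ℝ)/(k:ℝ) - 1/((k:ℝ)+1))
      ≤ ∑ k ∈ Finset.Icc 1 N, ((1:ℝ)/(k:ℝ) - 1/((k:ℝ)+1)) :=
        Finset.sum_le_sum_of_subset_of_nonneg hsub hnn
    _ = 1 - 1/((N:ℝ)+1) := aux_telescope N
    _ ≤ 1 := by
        have : (0:ℝ) < (N:ℝ)+1 := by positivity
        have : (0:ℝ) ≤ 1/((N:ℝ)+1) := by positivity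
        linarith

/-- Sum of 1/p² over a finite set of odd primes is at most 1/4. -/
lemma aux_sum_primes (P : Finset ℕ) (hP : ∀ p ∈ P, p.Prime) (hodd : ∀ p ∈ P, Odd p) :
    ∑ p ∈ P, (1:ℝ)/(p:ℝ)^2 ≤ 1/4 := by
  have key : ∀ p ∈ P, (1:ℝ)/(p:ℝ)^2 ≤
      (1/4) * ((1:ℝ)/(((p-1)/2 : ℕ):ℝ) - 1/((((p-1)/2 : ℕ):ℝ)+1)) := by
    intro p hp
    obtain ⟨k, hk⟩ := hodd p hp
    have h2 := (hP p hp).two_le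
    have hp3 : 3 ≤ p := by omega
    have hk1 : 1 ≤ k := by omega
    have hpk : (p - 1) / 2 = k := by omega
    rw [hpk]
    have hkR : (1:ℝ) ≤ (k:ℝ) := by exact_mod_cast hk1
    have hpR : (p:ℝ) = 2*(k:ℝ) + 1 := by
      have : p = 2*k+1 := by omega
      exact_mod_cast this
    have hk0 : (0:ℝ) < (k:ℝ) := by linarith
    have hk10 : (0:ℝ) < (k:ℝ)+1 := by linarith
    rw [hpR]
    have hone : (1:ℝ)/(k:ℝ) - 1/((k:ℝ)+1) = 1/((k:ℝ)*((k:ℝ)+1)) := by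
      field_simp
      ring
    rw [hone, show (1:ℝ)/4 * (1/((k:ℝ)*((k:ℝ)+1))) = 1/(4*((k:ℝ)*((k:ℝ)+1))) by rw [div_mul_div_comm, one_mul]]
    apply one_div_le_one_div_of_le (by positivity)
    nlinarith
  calc ∑ p ∈ P, (1:ℝ)/(p:ℝ)^2
      ≤ ∑ p ∈ P, (1/4) * ((1:ℝ)/(((p-1)/2 : ℕ):ℝ) - 1/((((p-1)/2 : ℕ):ℝ)+1)) :=
        Finset.sum_le_sum key
    _ = (1/4) * ∑ p ∈ P, ((1:ℝ)/(((p-1)/2 : ℕ):ℝ) - 1/((((p-1)/2 : ℕ):ℝ)+1)) := by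
        rw [Finset.mul_sum]
    _ ≤ (1/4) * 1 := by
        have hinj : ∀ x ∈ P, ∀ y ∈ P, (x-1)/2 = (y-1)/2 → x = y := by
          intro a ha b hb hab
          obtain ⟨x, hx⟩ := hodd a ha
          obtain ⟨y, hy⟩ := hodd b hb
          omega
        have himg := Finset.sum_image (g := fun p : ℕ => (p-1)/2)
          (f := fun k : ℕ => (1:ℝ)/(k:ℝ) - 1/((k:ℝ)+1)) (s := P) hinj
        rw [← himg]
        have hQ : ∀ k ∈ P.image (fun p => (p-1)/2), 1 ≤ k := by
          intro k hk
          obtain ⟨p, hp, rfl⟩ := Finset.mem_image.mp hk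
          have := (hP p hp).two_le
          obtain ⟨x, hx⟩ := hodd p hp
          omega
        have h1 := aux_sum_tel_le _ hQ
        linarith
    _ = 1/4 := by ring

/-- product of (1 - 1/p²) over finitely many odd primes is at least 3/4 -/
lemma aux_prod_primes (P : Finset ℕ) (hP : ∀ p ∈ P, p.Prime) (hodd : ∀ p ∈ P, Odd p) :
    (3/4:ℝ) ≤ ∏ p ∈ P, (1 - 1/(p:ℝ)^2) := by
  have h0 : ∀ p ∈ P, (0:ℝ) ≤ 1/(p:ℝ)^2 := by intro p hp; positivity
  have h1 : ∀ p ∈ P, (1:ℝ)/(p:ℝ)^2 ≤ 1 := by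
    intro p hp
    have h2 : (2:ℝ) ≤ (p:ℝ) := by exact_mod_cast (hP p hp).two_le
    rw [div_le_one (by positivity)]
    nlinarith
  have := aux_prod_one_sub P (fun p => 1/(p:ℝ)^2) h0 h1
  have hs := aux_sum_primes P hP hodd
  linarith

/-- σ(d)·φ(d) ≥ d² ∏_{p∣d} (1 - 1/p²) -/
lemma aux_sigma_totient (d : ℕ) (hd : 0 < d) :
    (d:ℝ)^2 * ∏ p ∈ d.primeFactors, (1 - 1/(p:ℝ)^2) ≤
      (∑ e ∈ d.divisors, (e:ℝ)) * (d.totient : ℝ) := by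
  induction d using Nat.recOnPosPrimePosCoprime with
  | prime_pow p n hp hn =>
    have hp' : p.Prime := hp
    have hp2 : (2:ℝ) ≤ (p:ℝ) := by exact_mod_cast hp'.two_le
    obtain ⟨m, rfl⟩ : ∃ m, n = m + 1 := ⟨n - 1, by omega⟩
    rw [Nat.primeFactors_prime_pow (by omega) hp, Finset.prod_singleton]
    rw [Nat.totient_prime_pow hp' (by omega : 0 < m + 1)]
    have hsub : ({p^(m+1), p^m} : Finset ℕ) ⊆ (p^(m+1)).divisors := by
      intro x hx
      simp only [Finset.mem_insert, Finset.mem_singleton] at hx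
      rcases hx with rfl | rfl
      · exact Nat.mem_divisors.mpr ⟨dvd_rfl, pow_ne_zero _ hp'.pos.ne'⟩
      · exact Nat.mem_divisors.mpr ⟨pow_dvd_pow p (by omega), pow_ne_zero _ hp'.pos.ne'⟩
    have hne : p^(m+1) ≠ p^m := by
      have := Nat.pow_lt_pow_right hp'.one_lt (show m < m + 1 by omega)
      omega
    have hσ : (p:ℝ)^(m+1) + (p:ℝ)^m ≤ ∑ e ∈ (p^(m+1)).divisors, (e:ℝ) := by
      have := Finset.sum_le_sum_of_subset_of_nonneg (f := fun e : ℕ => (e:ℝ)) hsub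
        (fun i _ _ => Nat.cast_nonneg i)
      rw [Finset.sum_insert (by simpa using hne), Finset.sum_singleton] at this
      push_cast at this
      linarith
    have hφ : ((p^m * (p - 1) : ℕ) : ℝ) = (p:ℝ)^m * ((p:ℝ) - 1) := by
      push_cast [Nat.cast_sub hp'.one_le]
      ring
    simp only [Nat.add_sub_cancel]
    rw [hφ]
    push_cast
    have hkey : ((p:ℝ)^(m+1))^2 * (1 - 1/(p:ℝ)^2)
        = ((p:ℝ)^(m+1) + (p:ℝ)^m) * ((p:ℝ)^m * ((p:ℝ) - 1)) := by
      have hp0 : (p:ℝ) ≠ 0 := by linarith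
      field_simp
      ring
    rw [hkey]
    apply mul_le_mul_of_nonneg_right hσ
    have hpm : (0:ℝ) ≤ (p:ℝ)^m := by positivity
    nlinarith
  | zero => exact absurd hd (by omega)
  | one => simp
  | coprime a b ha hb hab iha ihb =>
    have ha0 : 0 < a := by omega
    have hb0 : 0 < b := by omega
    have iha' := iha ha0
    have ihb' := ihb hb0
    rw [hab.primeFactors_mul, Finset.prod_union hab.disjoint_primeFactors]
    have hσmul : (∑ e ∈ (a*b).divisors, (e:ℝ))
        = (∑ e ∈ a.divisors, (e:ℝ)) * (∑ e ∈ b.divisors, (e:ℝ)) := by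
      have h2 := hab.sum_divisors_mul
      have h3 := congrArg (fun x : ℕ => (x:ℝ)) h2
      push_cast at h3
      exact h3
    rw [hσmul, Nat.totient_mul hab]
    have hprodnn : ∀ (c : ℕ), (0:ℝ) ≤ ∏ p ∈ c.primeFactors, (1 - 1/(p:ℝ)^2) := by
      intro c
      apply Finset.prod_nonneg
      intro p hp
      have h2 : (2:ℝ) ≤ (p:ℝ) := by exact_mod_cast (Nat.prime_of_mem_primeFactors hp).two_le
      have : (1:ℝ)/(p:ℝ)^2 ≤ 1 := by
        rw [div_le_one (by positivity)]; nlinarith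
      linarith
    have hL : ((a*b:ℕ):ℝ)^2 * ((∏ p ∈ a.primeFactors, (1 - 1/(p:ℝ)^2)) *
        ∏ p ∈ b.primeFactors, (1 - 1/(p:ℝ)^2))
        = ((a:ℝ)^2 * ∏ p ∈ a.primeFactors, (1 - 1/(p:ℝ)^2)) *
          ((b:ℝ)^2 * ∏ p ∈ b.primeFactors, (1 - 1/(p:ℝ)^2)) := by
      push_cast; ring
    rw [hL]
    push_cast
    calc ((a:ℝ)^2 * ∏ p ∈ a.primeFactors, (1 - 1/(p:ℝ)^2)) *
          ((b:ℝ)^2 * ∏ p ∈ b.primeFactors, (1 - 1/(p:ℝ)^2))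
        ≤ ((∑ e ∈ a.divisors, (e:ℝ)) * (a.totient : ℝ)) *
          ((∑ e ∈ b.divisors, (e:ℝ)) * (b.totient : ℝ)) := by
          apply mul_le_mul iha' ihb' (mul_nonneg (by positivity) (hprodnn b))
            (mul_nonneg (Finset.sum_nonneg fun i _ => Nat.cast_nonneg i) (Nat.cast_nonneg _))
      _ = (∑ e ∈ a.divisors, (e:ℝ)) * (∑ e ∈ b.divisors, (e:ℝ)) *
          ((a.totient : ℝ) * (b.totient : ℝ)) := by ring

theorem h_ge_of_KL_pos' (n : ℕ) (hn : 0 < n) (hKL : KL n > 0) :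
    h n ≥ 27 / (2 * Real.pi ^ 2) := by
  -- Step 1: find d ∣ n with 2 φ(d) < d
  obtain ⟨d, hdmem, hdpos⟩ : ∃ d ∈ n.divisors,
      0 < (d : ℝ) * Real.log ((d : ℝ) / (2 * (Nat.totient d : ℝ))) := by
    by_contra hc
    push_neg at hc
    have : KL n ≤ 0 := Finset.sum_nonpos hc
    linarith [hKL]
  have hddvd : d ∣ n := (Nat.mem_divisors.mp hdmem).1
  have hd0 : 0 < d := Nat.pos_of_mem_divisors hdmem
  have hφ0 : 0 < d.totient := Nat.totient_pos.mpr hd0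
  have hlogpos : 0 < Real.log ((d : ℝ) / (2 * (Nat.totient d : ℝ))) := by
    by_contra hc
    push_neg at hc
    have : (d:ℝ) * Real.log ((d : ℝ) / (2 * (Nat.totient d : ℝ))) ≤ 0 :=
      mul_nonpos_of_nonneg_of_nonpos (by positivity) hc
    linarith
  have hx1 : 1 < (d : ℝ) / (2 * (Nat.totient d : ℝ)) := by
    by_contra hc
    push_neg at hc
    have hxnn : (0:ℝ) ≤ (d : ℝ) / (2 * (Nat.totient d : ℝ)) := by positivity
    have := Real.log_nonpos hxnn hc
    linarith
  have hdφ : 2 * d.totient < d := by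
    have hφR : (0:ℝ) < 2 * (d.totient : ℝ) := by
      have : (0:ℝ) < (d.totient : ℝ) := by exact_mod_cast hφ0
      linarith
    rw [lt_div_iff₀ hφR] at hx1
    have : (2 * d.totient : ℝ) < (d:ℝ) := by linarith
    exact_mod_cast this
  -- Step 2: h n = ∑_{e ∣ n} 1/e
  have hsum : ∀ m : ℕ, 0 < m → h m = ∑ e ∈ m.divisors, (1:ℝ)/(e:ℝ) := by
    intro m hm
    have key := Nat.sum_div_divisors m (fun e => (1:ℝ)/(e:ℝ))
    have : ∑ e ∈ m.divisors, (1:ℝ)/(((m/e : ℕ)):ℝ) = ∑ e ∈ m.divisors, (e:ℝ)/(m:ℝ) := by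
      apply Finset.sum_congr rfl
      intro e he
      have hedvd : e ∣ m := (Nat.mem_divisors.mp he).1
      have he0 : 0 < e := Nat.pos_of_mem_divisors he
      rw [Nat.cast_div hedvd (by exact_mod_cast he0.ne')]
      rw [one_div_div]
    rw [this] at key
    rw [h]
    rw [← key, ← Finset.sum_div]
    rw [Nat.cast_sum]
  rw [hsum n hn]
  -- Step 3: ∑_{e ∣ n} 1/e ≥ 3/2
  have hge : (3/2:ℝ) ≤ ∑ e ∈ n.divisors, (1:ℝ)/(e:ℝ) := by
    rcases Nat.even_or_odd d with heven | hodd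
    · -- even case: 1 and 2 divide n
      have h2n : 2 ∣ n := dvd_trans heven.two_dvd hddvd
      have hsub : ({1, 2} : Finset ℕ) ⊆ n.divisors := by
        intro x hx
        simp only [Finset.mem_insert, Finset.mem_singleton] at hx
        rcases hx with rfl | rfl
        · exact Nat.one_mem_divisors.mpr hn.ne'
        · exact Nat.mem_divisors.mpr ⟨h2n, hn.ne'⟩
      have := Finset.sum_le_sum_of_subset_of_nonneg (f := fun e : ℕ => (1:ℝ)/(e:ℝ)) hsub
        (fun i _ _ => one_div_nonneg.mpr (Nat.cast_nonneg i))
      rw [Finset.sum_insert (by decide), Finset.sum_singleton] at this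
      calc (3/2:ℝ) = 1/((1:ℕ):ℝ) + 1/((2:ℕ):ℝ) := by norm_num
        _ ≤ _ := this
    · -- odd case
      have hP : ∀ p ∈ d.primeFactors, p.Prime := fun p hp => Nat.prime_of_mem_primeFactors hp
      have hPodd : ∀ p ∈ d.primeFactors, Odd p := by
        intro p hp
        have hpdvd : p ∣ d := Nat.dvd_of_mem_primeFactors hp
        rcases Nat.even_or_odd p with he | ho
        · exact absurd (hodd.of_dvd_nat hpdvd) (by
            intro _; exact (Nat.not_even_iff_odd.mpr (hodd.of_dvd_nat hpdvd)) he)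
        · exact ho
      have hprod := aux_prod_primes d.primeFactors hP hPodd
      have hst := aux_sigma_totient d hd0
      -- σ(d) ≥ (3/2) d
      have hφR : (0:ℝ) < (d.totient : ℝ) := by exact_mod_cast hφ0
      have hdR : (0:ℝ) < (d:ℝ) := by exact_mod_cast hd0
      have hφlt : 2 * (d.totient : ℝ) < (d:ℝ) := by exact_mod_cast hdφ
      have hσnn : (0:ℝ) ≤ ∑ e ∈ d.divisors, (e:ℝ) :=
        Finset.sum_nonneg fun i _ => by positivity
      have hσd : (3/2:ℝ) * (d:ℝ) ≤ ∑ e ∈ d.divisors, (e:ℝ) := by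
        nlinarith [mul_le_mul_of_nonneg_left hprod (by positivity : (0:ℝ) ≤ (d:ℝ)^2)]
      -- ∑_{e ∣ d} 1/e = σ(d)/d ≥ 3/2
      have hd32 : (3/2:ℝ) ≤ ∑ e ∈ d.divisors, (1:ℝ)/(e:ℝ) := by
        have := hsum d hd0
        rw [h] at this
        rw [← this]
        rw [le_div_iff₀ hdR]
        push_cast
        linarith
      have hsubd : d.divisors ⊆ n.divisors := Nat.divisors_subset_of_dvd hn.ne' hddvd
      have := Finset.sum_le_sum_of_subset_of_nonneg (f := fun e : ℕ => (1:ℝ)/(e:ℝ)) hsubd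
        (fun i _ _ => one_div_nonneg.mpr (Nat.cast_nonneg i))
      linarith
  -- Step 4: 27/(2π²) ≤ 3/2
  have hpi : (3:ℝ) < Real.pi := Real.pi_gt_three
  have hfin : 27 / (2 * Real.pi ^ 2) ≤ (3/2:ℝ) := by
    rw [div_le_iff₀ (by positivity)]
    nlinarith
  linarith
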